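/- Let H = [I_{n−k}, A | B, C] ∈ F2^{(n−k)×2n} be a check matrix in standard form, where A, C ∈ F2^{(n−k)×k} and B ∈ F2^{(n−k)×(n−k)}, and suppose H Λ Hᵀ = 0. Define the (n+k)×2n block matrix G = [[I_{n−k}, A, B, C], [0, I_k, Cᵀ, 0], [0, 0, Aᵀ, I_k]]. Then G Λ Hᵀ = 0, G has full row rank n + k, and consequently the row space of G equals the symplectic dual {v ∈ F2^{2n} : v Λ Hᵀ = 0} of the row space of H. -/

import Mathlib

open Matrix

/-- The binary field `F₂`. -/
abbrev F2 := ZMod 2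

/-- Qubit coordinates split as the first `n - k` and the last `k`. -/
abbrev Idx (n k : ℕ) := Fin (n - k) ⊕ Fin k

/-- The symplectic form matrix `Λ = [[0, I],[I, 0]]` on `F₂^{2n}`, with the `X`-part
(first `n` coordinates) and `Z`-part (last `n` coordinates) indexed by `Idx n k`. -/
def Lam (n k : ℕ) : Matrix (Idx n k ⊕ Idx n k) (Idx n k ⊕ Idx n k) F2 :=
  Matrix.fromBlocks 0 1 1 0

/- **Statement 9.** For a standard-form check matrix
`H = [I_{n−k}, A | B, C]` with `H Λ Hᵀ = 0`, the matrix
`G = [[I_{n−k}, A, B, C], [0, I_k, Cᵀ, 0], [0, 0, Aᵀ, I_k]]` satisfies `G Λ Hᵀ = 0`,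
has full row rank `n + k`, and its row space is the symplectic dual of `Row(H)`. -/
set_option maxHeartbeats 1600000 in
theorem statement9 (n k : ℕ) (hk : k < n)
    (A C : Matrix (Fin (n - k)) (Fin k) F2)
    (B : Matrix (Fin (n - k)) (Fin (n - k)) F2)
    (H : Matrix (Fin (n - k)) (Idx n k ⊕ Idx n k) F2)
    (hHdef : H = Matrix.fromCols (Matrix.fromCols 1 A) (Matrix.fromCols B C))
    (hH : H * Lam n k * H.transpose = 0)
    (G : Matrix (Fin (n - k) ⊕ (Fin k ⊕ Fin k)) (Idx n k ⊕ Idx n k) F2)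
    (hGdef : G = Matrix.fromRows H
      (Matrix.fromRows
        (Matrix.fromCols (Matrix.fromCols 0 1) (Matrix.fromCols C.transpose 0))
        (Matrix.fromCols (Matrix.fromCols 0 0) (Matrix.fromCols A.transpose 1)))) :
    G * Lam n k * H.transpose = 0 ∧
    G.rank = n + k ∧
    (Submodule.span F2 (Set.range G) : Set ((Idx n k ⊕ Idx n k) → F2))
      = {v : (Idx n k ⊕ Idx n k) → F2 |
          ∀ c ∈ Submodule.span F2 (Set.range H), v ⬝ᵥ (Lam n k *ᵥ c) = 0} := by
  have hchar : ∀ (m n : Type) [Fintype m] [Fintype n] (M : Matrix m n F2), M + M = 0 := by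
    intro m n _ _ M; ext i j; simp only [Matrix.add_apply, Matrix.zero_apply]
    exact CharTwo.add_self_eq_zero _
  -- Part 1: G Λ Hᵀ = 0
  have hGL : G * Lam n k * H.transpose = 0 := by
    rw [hGdef, Matrix.mul_assoc, Matrix.fromRows_mul, Matrix.fromRows_mul, ← Matrix.mul_assoc, hH]
    have hLHT : Lam n k * H.transpose =
        Matrix.fromRows (Matrix.fromRows B.transpose C.transpose)
          (Matrix.fromRows 1 A.transpose) := by
      rw [hHdef, Lam, Matrix.transpose_fromCols, Matrix.transpose_fromCols,
        Matrix.transpose_fromCols, Matrix.fromBlocks_mul_fromRows]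
      simp [Matrix.transpose_one]
    rw [hLHT]
    simp only [Matrix.fromCols_mul_fromRows, Matrix.zero_mul, Matrix.one_mul,
      Matrix.mul_one, zero_add, add_zero, hchar, Matrix.fromRows_zero]
  -- Part 2: rank G = n + k
  have hrankG : G.rank = n + k := by
    set P : Matrix (Idx n k ⊕ Idx n k) (Fin (n - k) ⊕ (Fin k ⊕ Fin k)) F2 :=
      Matrix.fromRows
        (Matrix.fromRows (Matrix.fromCols 1 (Matrix.fromCols A C))
          (Matrix.fromCols 0 (Matrix.fromCols 1 0)))
        (Matrix.fromRows (Matrix.fromCols 0 0)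
          (Matrix.fromCols 0 (Matrix.fromCols 0 1))) with hP
    have hGP : G * P = 1 := by
      rw [hGdef, hHdef, hP]
      simp only [Matrix.fromRows_mul, Matrix.fromCols_mul_fromRows, Matrix.mul_fromCols,
        Matrix.zero_mul, Matrix.one_mul, Matrix.mul_one, Matrix.mul_zero, zero_add, add_zero,
        Matrix.fromCols_zero]
      ext i j
      rcases i with i | i | i <;> rcases j with j | j | j <;>
        simp [Matrix.one_apply, Matrix.add_apply, Matrix.fromCols_apply_inl, Matrix.fromCols_apply_inr, Matrix.fromRows_apply_inl, Matrix.fromRows_apply_inr,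
          CharTwo.add_self_eq_zero]
    have h1 : ((n : ℕ) - k) + (k + k) ≤ G.rank := by
      have := Matrix.rank_mul_le_left G P
      rw [hGP, Matrix.rank_one] at this
      simpa [Fintype.card_sum] using this
    have h2 : G.rank ≤ ((n : ℕ) - k) + (k + k) := by
      simpa [Fintype.card_sum] using Matrix.rank_le_card_height G
    omega
  -- Part 3: row space of G is the symplectic dual of Row(H)
  refine ⟨hGL, hrankG, ?_⟩
  have hsym : (Lam n k)ᵀ = Lam n k := by
    simp [Lam, Matrix.fromBlocks_transpose]
  have hvm : ∀ v : (Idx n k ⊕ Idx n k) → F2, v ᵥ* Lam n k = Lam n k *ᵥ v := by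
    intro v; simpa [hsym] using Matrix.vecMul_transpose (Lam n k) v
  have hdot : ∀ (v w : (Idx n k ⊕ Idx n k) → F2),
      v ⬝ᵥ (Lam n k *ᵥ w) = (Lam n k *ᵥ v) ⬝ᵥ w := by
    intro v w; rw [Matrix.dotProduct_mulVec, hvm]
  set f := (H * Lam n k).mulVecLin with hf
  have hmem : ∀ v : (Idx n k ⊕ Idx n k) → F2,
      (∀ c ∈ Submodule.span F2 (Set.range H), v ⬝ᵥ (Lam n k *ᵥ c) = 0) ↔ f v = 0 := by
    intro v
    constructor
    · intro h
      have h2 : ∀ j, (H *ᵥ (Lam n k *ᵥ v)) j = 0 := by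
        intro j
        have h1 := h (H j) (Submodule.subset_span ⟨j, rfl⟩)
        rw [hdot, dotProduct_comm] at h1
        simpa [Matrix.mulVec, dotProduct] using h1
      have : H *ᵥ (Lam n k *ᵥ v) = 0 := funext h2
      simpa [hf, Matrix.mulVecLin_apply, ← Matrix.mulVec_mulVec] using this
    · intro h c hc
      induction hc using Submodule.span_induction with
      | mem x hx =>
        obtain ⟨j, rfl⟩ := hx
        have h1 : (H *ᵥ (Lam n k *ᵥ v)) j = 0 := by
          have : H *ᵥ (Lam n k *ᵥ v) = 0 := by
            simpa [hf, Matrix.mulVecLin_apply, ← Matrix.mulVec_mulVec] using h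
          rw [this]; rfl
        rw [hdot, dotProduct_comm]
        simpa [Matrix.mulVec, dotProduct] using h1
      | zero => simp
      | add x y _ _ hx hy => rw [Matrix.mulVec_add, dotProduct_add, hx, hy, add_zero]
      | smul a x _ hx => rw [Matrix.mulVec_smul, dotProduct_smul, hx, smul_zero]
  have hLL : Lam n k * Lam n k = 1 := by
    simp [Lam, Matrix.fromBlocks_multiply]
  set Q : Matrix (Idx n k ⊕ Idx n k) (Fin (n - k)) F2 :=
    Matrix.fromRows (Matrix.fromRows 1 0) (Matrix.fromRows 0 0) with hQ
  have hHQ : H * Q = 1 := by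
    rw [hHdef, hQ]
    simp [Matrix.fromCols_mul_fromRows]
  have hHLQ : (H * Lam n k) * (Lam n k * Q) = 1 := by
    rw [← Matrix.mul_assoc, Matrix.mul_assoc H, hLL, Matrix.mul_one, hHQ]
  have hrHL : (H * Lam n k).rank = n - k := by
    refine le_antisymm ?_ ?_
    · simpa using Matrix.rank_le_card_height (H * Lam n k)
    · have := Matrix.rank_mul_le_left (H * Lam n k) (Lam n k * Q)
      rw [hHLQ, Matrix.rank_one] at this
      simpa using this
  have hrn := LinearMap.finrank_range_add_finrank_ker f
  have hrange : Module.finrank F2 (LinearMap.range f) = n - k := hrHL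
  have hdim : Module.finrank F2 ((Idx n k ⊕ Idx n k) → F2) = ((n - k) + k) + ((n - k) + k) := by
    simp [Module.finrank_pi]
  have hker : Module.finrank F2 (LinearMap.ker f) = n + k := by omega
  have hspan : Submodule.span F2 (Set.range G) = LinearMap.ker f := by
    apply Submodule.eq_of_le_of_finrank_eq
    · rw [Submodule.span_le]
      rintro _ ⟨i, rfl⟩
      simp only [SetLike.mem_coe, LinearMap.mem_ker]
      have h0 : H * Lam n k * Gᵀ = 0 := by
        have h1 := congrArg Matrix.transpose hGL
        rw [Matrix.transpose_zero] at h1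
        calc H * Lam n k * Gᵀ = (G * Lam n k * Hᵀ)ᵀ := by
              rw [Matrix.transpose_mul, Matrix.transpose_mul, Matrix.transpose_transpose, hsym,
                Matrix.mul_assoc]
          _ = 0 := h1
      show (H * Lam n k) *ᵥ G i = 0
      funext j
      have h2 : ((H * Lam n k) * Gᵀ) j i = 0 := by rw [h0]; rfl
      simpa [Matrix.mul_apply, Matrix.mulVec, dotProduct] using h2
    · rw [show Set.range G = Set.range G.row from rfl, ← Matrix.rank_eq_finrank_span_row, hrankG, hker]
  ext v
  rw [hspan]
  simp only [SetLike.mem_coe, LinearMap.mem_ker, Set.mem_setOf_eq]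
  exact (hmem v).symm
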